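/- Let t > 0 and define f(s) = |t/(2t+s) - 3t/(5t+s)| + |t/(2t+s) - 2t/(5t+s)| for s ≥ 0. Then on the interval [0, 2t], f attains its minimum value uniquely at s = t. -/
import Mathlib


theorem mnl_agreement_min_at_t (t : ℝ) (ht : 0 < t)
    (f : ℝ → ℝ)
    (hf : ∀ s, f s = |t / (2*t + s) - 3*t / (5*t + s)| + |t / (2*t + s) - 2*t / (5*t + s)|) :
    ∀ s, 0 ≤ s → s ≤ 2*t → (f t ≤ f s ∧ (f s = f t → s = t)) := by
  intro s hs0 hs2
  have ha : 0 < 2*t + s := by linarith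
  have hb : 0 < 5*t + s := by linarith
  have hab : 0 < (2*t + s) * (5*t + s) := mul_pos ha hb
  have htne : t ≠ 0 := ne_of_gt ht
  -- value at t
  have hft : f t = 1/6 := by
    rw [hf]
    have e1 : t / (2*t + t) - 3*t / (5*t + t) = -(1/6) := by field_simp; ring
    have e2 : t / (2*t + t) - 2*t / (5*t + t) = 0 := by field_simp; ring
    rw [e1, e2, abs_zero, abs_neg, abs_of_nonneg (by norm_num)]
    norm_num
  -- first term is nonpositive inside abs
  have h1 : t / (2*t + s) - 3*t / (5*t + s)
      = -(t*(t+2*s) / ((2*t + s) * (5*t + s))) := by field_simp; ring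
  have h2 : t / (2*t + s) - 2*t / (5*t + s)
      = t*(t-s) / ((2*t + s) * (5*t + s)) := by field_simp; ring
  have habs1 : |t / (2*t + s) - 3*t / (5*t + s)|
      = t*(t+2*s) / ((2*t + s) * (5*t + s)) := by
    rw [h1, abs_neg, abs_of_nonneg]
    exact div_nonneg (by nlinarith) (le_of_lt hab)
  rcases le_or_gt s t with hst | hst
  · -- s ≤ t : f s = t/(5t+s)
    have habs2 : |t / (2*t + s) - 2*t / (5*t + s)|
        = t*(t-s) / ((2*t + s) * (5*t + s)) := by
      rw [h2, abs_of_nonneg]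
      exact div_nonneg (by nlinarith) (le_of_lt hab)
    have hfs : f s = t / (5*t + s) := by
      rw [hf, habs1, habs2]
      field_simp
      ring
    constructor
    · rw [hfs, hft, div_le_div_iff₀ (by norm_num) hb]
      linarith
    · intro h
      rw [hfs, hft] at h
      field_simp at h
      linarith
  · -- t < s : f s = 3ts/D
    have habs2 : |t / (2*t + s) - 2*t / (5*t + s)|
        = -(t*(t-s)) / ((2*t + s) * (5*t + s)) := by
      rw [h2, abs_of_nonpos, neg_div]
      exact div_nonpos_of_nonpos_of_nonneg (by nlinarith) (le_of_lt hab)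
    have hfs : f s = 3*t*s / ((2*t + s) * (5*t + s)) := by
      rw [hf, habs1, habs2]
      field_simp
      ring
    constructor
    · rw [hfs, hft, div_le_div_iff₀ (by norm_num) hab]
      nlinarith [mul_nonneg (le_of_lt (sub_pos.2 hst)) (by linarith : (0:ℝ) ≤ 10*t - s)]
    · intro h
      rw [hfs, hft] at h
      have hkey : (s - t) * (10*t - s) = 0 := by
        field_simp at h
        nlinarith [h]
      rcases mul_eq_zero.1 hkey with h' | h'
      · linarith
      · linarith
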